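/- Let p be an odd prime. The power sum polynomials (aX+bY+cZ)^(p-1) of the binomial(p+1,2) points (1,b,c) of PG(2,p) with b,c ≥ 0 and b+c ≤ p-1 are linearly independent over F_p. -/

import Mathlib

open MvPolynomial
open Finsupp

lemma msupp_eq_iff (a b c x y z : ℕ) :
    (single (0:Fin 3) a + single 1 b + single 2 c : Fin 3 →₀ ℕ)
      = single 0 x + single 1 y + single 2 z ↔ a = x ∧ b = y ∧ c = z := by
  constructor
  · intro h
    refine ⟨?_, ?_, ?_⟩
    · have := DFunLike.congr_fun h (0 : Fin 3); simpa [Finsupp.single_apply] using this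
    · have := DFunLike.congr_fun h (1 : Fin 3); simpa [Finsupp.single_apply] using this
    · have := DFunLike.congr_fun h (2 : Fin 3); simpa [Finsupp.single_apply] using this
  · rintro ⟨rfl, rfl, rfl⟩; rfl

lemma key_coeff {R : Type*} [CommRing R] (b c : R) (n i j : ℕ) (h : i + j ≤ n) :
    coeff (single 0 (n-i-j) + single 1 i + single 2 j)
      ((X 0 + C b * X 1 + C c * X 2 : MvPolynomial (Fin 3) R) ^ n)
    = (n.choose (i+j) * (i+j).choose i : ℕ) * (b ^ i * c ^ j) := by
  have hcond : ∀ x x1 : ℕ, ((single (0:Fin 3) x) + ((single 1 x1) + single 2 (n-x-x1))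
      = ((single 0 (n-i-j)) + single 1 i) + single 2 j)
      ↔ (x = n-i-j ∧ x1 = i ∧ n-x-x1 = j) := by
    intro x x1; rw [← add_assoc, msupp_eq_iff]
  rw [show (X 0 + C b * X 1 + C c * X 2 : MvPolynomial (Fin 3) R)
      = X 0 + (C b * X 1 + C c * X 2) from by ring, add_pow]
  simp only [add_pow, Finset.mul_sum, Finset.sum_mul, mul_pow, ← C_eq_coe_nat, C_pow,
    X_pow_eq_monomial, C_apply, monomial_pow, smul_zero, monomial_mul, coeff_sum, coeff_monomial,
    one_mul, mul_one, add_zero, zero_add]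
  simp only [hcond]
  rw [Finset.sum_eq_single (n-i-j)]
  · rw [Finset.sum_eq_single i]
    · rw [if_pos ⟨rfl, rfl, by omega⟩]
      rw [show n - (n-i-j) = i + j from by omega, show i + j - i = j from by omega,
        show n - i - j = n - (i+j) from by omega, Nat.choose_symm (by omega)]
      push_cast
      ring
    · intro x1 _ hne
      rw [if_neg (by tauto)]
    · intro hnotmem
      exfalso; exact hnotmem (Finset.mem_range.2 (by omega))
  · intro x _ hne
    exact Finset.sum_eq_zero fun x1 _ => if_neg (by tauto)
  · intro hnotmem
    exfalso; exact hnotmem (Finset.mem_range.2 (by omega))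

lemma choose_cast_ne_zero (p : ℕ) [hp : Fact p.Prime] {n k : ℕ} (hn : n < p) (hk : k ≤ n) :
    ((n.choose k : ℕ) : ZMod p) ≠ 0 := by
  intro h0
  rw [ZMod.natCast_eq_zero_iff] at h0
  have h1 : p ∣ n.factorial := h0.trans ⟨k.factorial * (n-k).factorial, by
    rw [← Nat.choose_mul_factorial_mul_factorial hk]; ring⟩
  exact absurd ((Nat.Prime.dvd_factorial hp.out).1 h1) (by omega)

noncomputable def Qpoly (p n b₀ c₀ : ℕ) : MvPolynomial (Fin 2) (ZMod p) :=
  (∏ u ∈ Finset.range b₀, (X 0 - C (u : ZMod p))) *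
  (∏ v ∈ Finset.range c₀, (X 1 - C (v : ZMod p))) *
  (∏ w ∈ Finset.Ico (b₀+c₀+1) (n+1), (X 0 + X 1 - C (w : ZMod p)))

lemma Qpoly_totalDegree (p n b₀ c₀ : ℕ) [hp : Fact p.Prime] (h : b₀ + c₀ ≤ n) :
    (Qpoly p n b₀ c₀).totalDegree ≤ n := by
  haveI : Fact (1 < p) := ⟨hp.out.one_lt⟩
  unfold Qpoly
  refine le_trans ((totalDegree_mul _ _).trans (add_le_add_left (totalDegree_mul _ _) _)) ?_
  have h1 : ∀ (u : ℕ) (k : Fin 2), (X k - C (u : ZMod p) : MvPolynomial (Fin 2) (ZMod p)).totalDegree ≤ 1 :=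
    fun u k => (totalDegree_sub_C_le _ _).trans_eq (totalDegree_X k)
  have h2 : ∀ (u : ℕ), (X 0 + X 1 - C (u : ZMod p) : MvPolynomial (Fin 2) (ZMod p)).totalDegree ≤ 1 := by
    intro u
    refine (totalDegree_sub_C_le _ _).trans ?_
    exact (totalDegree_add _ _).trans (by simp [totalDegree_X])
  have e1 := (totalDegree_finset_prod (Finset.range b₀) (fun u => (X 0 - C (u : ZMod p) : MvPolynomial (Fin 2) (ZMod p)))).trans
    (Finset.sum_le_card_nsmul _ _ 1 (fun u _ => h1 u 0))
  have e2 := (totalDegree_finset_prod (Finset.range c₀) (fun v => (X 1 - C (v : ZMod p) : MvPolynomial (Fin 2) (ZMod p)))).trans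
    (Finset.sum_le_card_nsmul _ _ 1 (fun v _ => h1 v 1))
  have e3 := (totalDegree_finset_prod (Finset.Ico (b₀+c₀+1) (n+1)) (fun w => (X 0 + X 1 - C (w : ZMod p) : MvPolynomial (Fin 2) (ZMod p)))).trans
    (Finset.sum_le_card_nsmul _ _ 1 (fun w _ => h2 w))
  simp only [Finset.card_range, Nat.card_Ico, smul_eq_mul, mul_one] at e1 e2 e3
  omega

lemma Qpoly_eval (p n b₀ c₀ b c : ℕ) :
    eval ![(b : ZMod p), (c : ZMod p)] (Qpoly p n b₀ c₀) =
    (∏ u ∈ Finset.range b₀, ((b : ZMod p) - u)) *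
    (∏ v ∈ Finset.range c₀, ((c : ZMod p) - v)) *
    (∏ w ∈ Finset.Ico (b₀+c₀+1) (n+1), ((b : ZMod p) + c - w)) := by
  simp [Qpoly]

lemma natCast_ne_zero' (p : ℕ) [hp : Fact p.Prime] {k : ℕ} (h1 : 0 < k) (h2 : k < p) :
    (k : ZMod p) ≠ 0 := by
  rw [Ne, ZMod.natCast_eq_zero_iff]
  intro hdvd
  have := Nat.le_of_dvd h1 hdvd; omega

lemma Qpoly_eval_ne_zero (p n b₀ c₀ : ℕ) [hp : Fact p.Prime] (h : b₀ + c₀ ≤ n) (hn : n < p) :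
    eval ![(b₀ : ZMod p), (c₀ : ZMod p)] (Qpoly p n b₀ c₀) ≠ 0 := by
  rw [Qpoly_eval]
  refine mul_ne_zero (mul_ne_zero ?_ ?_) ?_
  · rw [Finset.prod_ne_zero_iff]
    intro u hu
    rw [Finset.mem_range] at hu
    rw [show ((b₀ : ZMod p) - u) = ((b₀ - u : ℕ) : ZMod p) from by
      rw [Nat.cast_sub hu.le]]
    exact natCast_ne_zero' p (by omega) (by omega)
  · rw [Finset.prod_ne_zero_iff]
    intro v hv
    rw [Finset.mem_range] at hv
    rw [show ((c₀ : ZMod p) - v) = ((c₀ - v : ℕ) : ZMod p) from by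
      rw [Nat.cast_sub hv.le]]
    exact natCast_ne_zero' p (by omega) (by omega)
  · rw [Finset.prod_ne_zero_iff]
    intro w hw
    rw [Finset.mem_Ico] at hw
    rw [show ((b₀ : ZMod p) + c₀ - w) = -((w - (b₀ + c₀) : ℕ) : ZMod p) from by
      rw [Nat.cast_sub (by omega)]; push_cast; ring]
    exact neg_ne_zero.2 (natCast_ne_zero' p (by omega) (by omega))

lemma Qpoly_eval_eq_zero (p n b₀ c₀ b c : ℕ) [hp : Fact p.Prime]
    (hb : b + c ≤ n) (hne : (b, c) ≠ (b₀, c₀)) (hb0 : b₀ + c₀ ≤ n) :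
    eval ![(b : ZMod p), (c : ZMod p)] (Qpoly p n b₀ c₀) = 0 := by
  rw [Qpoly_eval]
  by_cases h1 : b < b₀
  · refine mul_eq_zero.2 (Or.inl (mul_eq_zero.2 (Or.inl ?_)))
    exact Finset.prod_eq_zero (Finset.mem_range.2 h1) (by simp)
  by_cases h2 : c < c₀
  · refine mul_eq_zero.2 (Or.inl (mul_eq_zero.2 (Or.inr ?_)))
    exact Finset.prod_eq_zero (Finset.mem_range.2 h2) (by simp)
  · refine mul_eq_zero.2 (Or.inr ?_)
    have hgt : b₀ + c₀ + 1 ≤ b + c := by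
      rcases Nat.lt_or_ge (b₀ + c₀) (b + c) with h | h
      · omega
      · exfalso; apply hne; have : b = b₀ ∧ c = c₀ := by omega
        simp [this.1, this.2]
    refine Finset.prod_eq_zero (Finset.mem_Ico.2 ⟨hgt, by omega⟩) ?_
    push_cast; ring

/-- For p an odd prime, the power sum polynomials (X + bY + cZ)^(p-1) of the
binomial(p+1,2) points (1,b,c) with b,c ≥ 0, b + c ≤ p-1, are linearly independent
over F_p. -/
theorem powerSums_linearIndependent (p : ℕ) [Fact p.Prime] (hp : Odd p) :
    LinearIndependent (ZMod p)
      (fun bc : {x : ℕ × ℕ // x.1 + x.2 ≤ p - 1} =>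
        (X 0 + C ((bc.1.1 : ZMod p)) * X 1 + C ((bc.1.2 : ZMod p)) * X 2) ^ (p - 1)
          : {x : ℕ × ℕ // x.1 + x.2 ≤ p - 1} → MvPolynomial (Fin 3) (ZMod p)) := by
  have hp2 : 2 ≤ p := (Fact.out : p.Prime).two_le
  have hnp : p - 1 < p := by omega
  rw [linearIndependent_iff']
  intro s g hsum t0 ht0
  -- Step A: pure power sums vanish
  have hpow : ∀ i j : ℕ, i + j ≤ p - 1 →
      ∑ t ∈ s, g t * ((t.1.1 : ZMod p) ^ i * ((t.1.2 : ZMod p)) ^ j) = 0 := by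
    intro i j hij
    have h1 := congrArg (coeff (single 0 (p-1-i-j) + single 1 i + single 2 j)) hsum
    rw [coeff_zero, coeff_sum] at h1
    simp only [coeff_smul, smul_eq_mul] at h1
    have h2 : ∀ t ∈ s, g t * coeff (single 0 (p-1-i-j) + single 1 i + single 2 j)
        ((X 0 + C ((t.1.1 : ZMod p)) * X 1 + C ((t.1.2 : ZMod p)) * X 2
            : MvPolynomial (Fin 3) (ZMod p)) ^ (p - 1))
        = (((p-1).choose (i+j) * (i+j).choose i : ℕ) : ZMod p) *
            (g t * ((t.1.1 : ZMod p) ^ i * ((t.1.2 : ZMod p)) ^ j)) := by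
      intro t _
      rw [key_coeff _ _ _ _ _ hij]; ring
    rw [Finset.sum_congr rfl h2, ← Finset.mul_sum] at h1
    have hM : (((p-1).choose (i+j) * (i+j).choose i : ℕ) : ZMod p) ≠ 0 := by
      push_cast
      exact mul_ne_zero (choose_cast_ne_zero p hnp hij)
        (choose_cast_ne_zero p (lt_of_le_of_lt hij hnp) (Nat.le_add_right i j))
    exact (mul_eq_zero.1 h1).resolve_left hM
  -- Step B: sums against any low-degree bivariate polynomial vanish
  have hF : ∀ F : MvPolynomial (Fin 2) (ZMod p), F.totalDegree ≤ p - 1 →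
      ∑ t ∈ s, g t * eval ![(t.1.1 : ZMod p), (t.1.2 : ZMod p)] F = 0 := by
    intro F hdeg
    have hev : ∀ t : {x : ℕ × ℕ // x.1 + x.2 ≤ p - 1},
        eval ![(t.1.1 : ZMod p), (t.1.2 : ZMod p)] F
        = ∑ d ∈ F.support, coeff d F * ((t.1.1 : ZMod p) ^ d 0 * ((t.1.2 : ZMod p)) ^ d 1) := by
      intro t
      rw [eval_eq]
      refine Finset.sum_congr rfl fun d _ => ?_
      congr 1
      rw [show (∏ k ∈ d.support, ![(t.1.1 : ZMod p), (t.1.2 : ZMod p)] k ^ d k)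
          = ∏ k : Fin 2, ![(t.1.1 : ZMod p), (t.1.2 : ZMod p)] k ^ d k from
        Finset.prod_subset (Finset.subset_univ _)
          (fun k _ hk => by simp [Finsupp.notMem_support_iff.1 hk]), Fin.prod_univ_two]
      simp
    simp only [hev, Finset.mul_sum]
    rw [Finset.sum_comm]
    refine Finset.sum_eq_zero fun d hd => ?_
    have hdle : d 0 + d 1 ≤ p - 1 := by
      have h3 := le_totalDegree hd
      have h4 : d.sum (fun _ e => e) = d 0 + d 1 := by
        rw [Finsupp.sum_fintype]
        · exact Fin.sum_univ_two d
        · intro _; rfl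
      omega
    have : ∀ t ∈ s, g t * (coeff d F * ((t.1.1 : ZMod p) ^ d 0 * ((t.1.2 : ZMod p)) ^ d 1))
        = coeff d F * (g t * ((t.1.1 : ZMod p) ^ d 0 * ((t.1.2 : ZMod p)) ^ d 1)) :=
      fun t _ => by ring
    rw [Finset.sum_congr rfl this, ← Finset.mul_sum, hpow _ _ hdle, mul_zero]
  -- Step C
  have hQ := hF (Qpoly p (p-1) t0.1.1 t0.1.2) (Qpoly_totalDegree _ _ _ _ t0.2)
  rw [Finset.sum_eq_single t0] at hQ
  · exact (mul_eq_zero.1 hQ).resolve_right (Qpoly_eval_ne_zero p (p-1) _ _ t0.2 hnp)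
  · intro t _ htne
    rw [Qpoly_eval_eq_zero p (p-1) _ _ _ _ t.2 (fun he => htne (Subtype.ext (by
      rcases t with ⟨⟨a, b⟩, _⟩; rcases t0 with ⟨⟨a0, b0⟩, _⟩; exact he))) t0.2, mul_zero]
  · intro h; exact absurd ht0 h
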